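/- Let T(Δ) be the twisted arrow category of the simplex category Δ: its objects are morphisms θ : [n] → [m] of Δ, and a morphism from θ₁ : [n₁] → [m₁] to θ₂ : [n₂] → [m₂] is a pair of morphisms (α : [n₂] → [n₁], β : [m₁] → [m₂]) of Δ with β ∘ θ₁ ∘ α = θ₂. Let p : T(Δ) → Δ be the functor sending θ : [n] → [m] to [m] and (α, β) to β. Then p is an initial functor: for every object [m] of Δ, the comma category p/[m], whose objects are pairs of an object θ of T(Δ) and a morphism p(θ) → [m] in Δ, is connected. Consequently, limits of Δ-indexed diagrams are unchanged by precomposition with p. -/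

import Mathlib

open CategoryTheory

/-- The twisted arrow category `T(Δ)` of the simplex category, realized as the category of
elements of the hom bifunctor `Δᵒᵖ × Δ ⥤ Type`: objects are morphisms `θ : [n] → [m]` of `Δ`,
and morphisms from `θ₁ : [n₁] → [m₁]` to `θ₂ : [n₂] → [m₂]` are pairs
`(α : [n₂] → [n₁], β : [m₁] → [m₂])` with `β ∘ θ₁ ∘ α = θ₂`. -/
abbrev TwistedArrowSimplex : Type :=
  (Functor.hom SimplexCategory).Elements

/-- The projection `p : T(Δ) ⥤ Δ` sending `θ : [n] → [m]` to `[m]` and `(α, β)` to `β`. -/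
def twistedArrowProj : TwistedArrowSimplex ⥤ SimplexCategory :=
  CategoryOfElements.π (Functor.hom SimplexCategory) ⋙
    CategoryTheory.Prod.snd SimplexCategoryᵒᵖ SimplexCategory

/-- Helper constructor for objects of `T(Δ)`. -/
def twistedEl (n : SimplexCategoryᵒᵖ) (k : SimplexCategory) (θ : n.unop ⟶ k) :
    TwistedArrowSimplex :=
  ⟨(n, k), θ⟩

section Aux

variable (m : SimplexCategory)

/-- The base object of `p/[m]`: the identity `[m] ⟶ [m]` with structure map `𝟙 [m]`. -/
def twistedBase : CostructuredArrow twistedArrowProj m :=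
  CostructuredArrow.mk (Y := twistedEl (Opposite.op m) m (𝟙 m)) (𝟙 m)

lemma twistedZigzag (X : CostructuredArrow twistedArrowProj m) :
    Zigzag X (twistedBase m) := by
  -- θ : n ⟶ k, f : k ⟶ m
  obtain ⟨⟨⟨n, k⟩, θ⟩, ⟨⟨⟩⟩, f⟩ := X
  dsimp [twistedArrowProj, Functor.hom] at θ f
  -- step 1: map to (θ ≫ f : n.unop ⟶ m, 𝟙 m)
  let X₁ : CostructuredArrow twistedArrowProj m :=
    CostructuredArrow.mk (Y := twistedEl n m (θ ≫ f)) (𝟙 m)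
  have h₁ : Zag (CostructuredArrow.mk
      (Y := twistedEl n k θ) f) X₁ := by
    left
    exact ⟨CostructuredArrow.homMk ⟨(𝟙 n, f), by simp [X₁, Functor.hom, twistedEl]; rfl⟩
      (by simp [X₁, twistedArrowProj, twistedEl]; exact Category.comp_id _)⟩
  -- step 2: map to the constant map at (θ ≫ f) applied at a point
  let α : SimplexCategory.mk 0 ⟶ n.unop := SimplexCategory.const _ _ 0
  let X₂ : CostructuredArrow twistedArrowProj m :=
    CostructuredArrow.mk (Y := twistedEl (Opposite.op (SimplexCategory.mk 0)) m (α ≫ θ ≫ f)) (𝟙 m)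
  have h₂ : Zag X₁ X₂ := by
    left
    exact ⟨CostructuredArrow.homMk ⟨(α.op, 𝟙 m), by simp [X₁, X₂, Functor.hom, twistedEl, twistedBase]; rfl⟩
      (by simp [X₁, X₂, twistedArrowProj, twistedEl, twistedBase]; rfl)⟩
  -- step 3: the base maps to X₂
  have h₃ : Zag X₂ (twistedBase m) := by
    right
    exact ⟨CostructuredArrow.homMk ⟨((α ≫ θ ≫ f).op, 𝟙 m), by simp [X₁, X₂, Functor.hom, twistedEl, twistedBase]; rfl⟩
      (by simp [X₁, X₂, twistedArrowProj, twistedBase, twistedEl]; rfl)⟩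
  exact .trans (.trans (.single h₁) (.single h₂)) (.single h₃)

end Aux

/-- the projection `p : T(Δ) ⥤ Δ` is an initial functor: for every object `[m]`
of `Δ` the comma category `p/[m]` is connected, and consequently limits of `Δ`-indexed
diagrams are unchanged by precomposition with `p`. -/
theorem twistedArrowProj_initial :
    (∀ m : SimplexCategory, IsConnected (CostructuredArrow twistedArrowProj m)) ∧
    twistedArrowProj.Initial := by
  have h : ∀ m : SimplexCategory, IsConnected (CostructuredArrow twistedArrowProj m) := by
    intro m
    have : Nonempty (CostructuredArrow twistedArrowProj m) := ⟨twistedBase m⟩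
    apply zigzag_isConnected
    intro j₁ j₂
    exact .trans (twistedZigzag m j₁) (zigzag_symmetric.symm _ _ (twistedZigzag m j₂))
  exact ⟨h, ⟨h⟩⟩
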